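/- arXiv:1301.4146 — 4 statements merged into one kernel-verified Lean document; each statement's English description precedes it below -/
import Mathlib

section
/- Let h : ℝ → ℝ and let ξ, ξ' > 0, δ > 0, τ₀ > 0, 0 < γ < 2 and 0 < λ < 1 be constants such that ξ/τ² ≤ h(τ) ≤ ξ'/τ^γ for all τ ≥ τ₀. Then there exists a positive integer N such that there are infinitely many positive integers n with N·n·δ ≥ τ₀ and h((N+1)·n·δ) ≥ λ·h(N·n·δ). -/
/-- If `ξ/τ² ≤ h τ ≤ ξ'/τ^γ` for all `τ ≥ τ₀` (with `0 < γ < 2`,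
`0 < λ < 1`, `δ > 0`), then there is a positive integer `N` with infinitely many
positive integers `n` such that `N·n·δ ≥ τ₀` and `h((N+1)nδ) ≥ λ·h(Nnδ)`. -/
theorem stmt0 (h : ℝ → ℝ) (ξ ξ' δ τ₀ γ lam : ℝ)
    (hξ : 0 < ξ) (hξ' : 0 < ξ') (hδ : 0 < δ) (hτ₀ : 0 < τ₀)
    (hγ0 : 0 < γ) (hγ2 : γ < 2) (hlam0 : 0 < lam) (hlam1 : lam < 1)
    (hlow : ∀ τ : ℝ, τ₀ ≤ τ → ξ / τ ^ 2 ≤ h τ)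
    (hup : ∀ τ : ℝ, τ₀ ≤ τ → h τ ≤ ξ' / τ ^ γ) :
    ∃ N : ℕ, 0 < N ∧
      {n : ℕ | 0 < n ∧ τ₀ ≤ (N : ℝ) * n * δ ∧
        lam * h ((N : ℝ) * n * δ) ≤ h (((N : ℝ) + 1) * n * δ)}.Infinite := by
  by_contra hcon
  push_neg at hcon
  -- For each N, the good set is finite, hence bounded.
  have hb : ∀ N : ℕ, ∃ M : ℕ, ∀ n : ℕ, 0 < N → 0 < n →
      τ₀ ≤ (N : ℝ) * n * δ → lam * h ((N : ℝ) * n * δ) ≤ h (((N : ℝ) + 1) * n * δ) →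
      n ≤ M := by
    intro N
    by_cases hN : 0 < N
    · obtain ⟨M, hM⟩ := (hcon N hN).bddAbove
      exact ⟨M, fun n _ h1 h2 h3 => hM ⟨h1, h2, h3⟩⟩
    · exact ⟨0, fun n hh => absurd hh hN⟩
  choose Mf hMf using hb
  -- choose B with lam ^ B < 1/4
  obtain ⟨B₀, hB₀⟩ := exists_pow_lt_of_lt_one (by norm_num : (0:ℝ) < 1/4) hlam1
  set B := max B₀ 1 with hBdef
  have hB1 : 1 ≤ B := le_max_right _ _
  have hBlam : lam ^ B < 1 / 4 :=
    lt_of_le_of_lt (pow_le_pow_of_le_one hlam0.le hlam1.le (le_max_left _ _)) hB₀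
  have hBposR : (0:ℝ) < (B:ℝ) := by exact_mod_cast hB1
  set Ms := (Finset.Ico B (2*B)).sup Mf with hMsdef
  set n₀ := max (Ms + 1) (⌈τ₀ / ((B:ℝ) * δ)⌉₊ + 1) with hn₀def
  have hn₀Ms : Ms + 1 ≤ n₀ := le_max_left _ _
  have hn₀c : ⌈τ₀ / ((B:ℝ) * δ)⌉₊ + 1 ≤ n₀ := le_max_right _ _
  have hBδ : 0 < (B:ℝ) * δ := mul_pos hBposR hδ
  have hτB : ∀ n : ℕ, n₀ ≤ n → τ₀ ≤ (B:ℝ) * n * δ := by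
    intro n hn
    have h1 : τ₀ / ((B:ℝ)*δ) ≤ (n:ℝ) := by
      calc τ₀ / ((B:ℝ)*δ) ≤ (⌈τ₀ / ((B:ℝ)*δ)⌉₊ : ℝ) := Nat.le_ceil _
        _ ≤ (n:ℝ) := by exact_mod_cast (by omega : ⌈τ₀ / ((B:ℝ)*δ)⌉₊ ≤ n)
    calc τ₀ ≤ (n:ℝ) * ((B:ℝ)*δ) := (div_le_iff₀ hBδ).mp h1
      _ = (B:ℝ)*n*δ := by ring
  -- the basic decay step
  have hstep : ∀ N : ℕ, B ≤ N → N < 2*B → ∀ n : ℕ, n₀ ≤ n →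
      h (((N:ℝ)+1)*n*δ) < lam * h ((N:ℝ)*n*δ) := by
    intro N hN1 hN2 n hn
    have hNpos : 0 < N := by omega
    have hnpos : 0 < n := by omega
    have hτN : τ₀ ≤ (N:ℝ)*n*δ := by
      have hle : (B:ℝ) ≤ (N:ℝ) := by exact_mod_cast hN1
      have hn0 : (0:ℝ) ≤ (n:ℝ)*δ := by positivity
      nlinarith [hτB n hn]
    by_contra hle
    push_neg at hle
    have hmem : Mf N ≤ Ms :=
      Finset.le_sup (by simp only [Finset.mem_Ico]; omega)
    have := hMf N n hNpos hnpos hτN hle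
    omega
  -- decay across a block
  have hinner : ∀ n : ℕ, n₀ ≤ n → ∀ i : ℕ, i ≤ B →
      h (((B:ℝ)+i)*n*δ) ≤ lam^i * h ((B:ℝ)*n*δ) := by
    intro n hn i
    induction i with
    | zero => intro _; simp
    | succ i ih =>
      intro hiB
      have ih' := ih (by omega)
      have hs := hstep (B+i) (by omega) (by omega) n hn
      have hcast : ((B+i : ℕ):ℝ) = (B:ℝ)+(i:ℝ) := by push_cast; ring
      rw [hcast] at hs
      have hcast2 : ((B:ℝ)+((i+1:ℕ):ℝ))*n*δ = ((B:ℝ)+(i:ℝ)+1)*n*δ := by push_cast; ring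
      rw [hcast2]
      calc h (((B:ℝ)+(i:ℝ)+1)*n*δ) ≤ lam * h (((B:ℝ)+(i:ℝ))*n*δ) := hs.le
        _ ≤ lam * (lam^i * h ((B:ℝ)*n*δ)) := mul_le_mul_of_nonneg_left ih' hlam0.le
        _ = lam^(i+1) * h ((B:ℝ)*n*δ) := by ring
  set T := (B:ℝ) * (n₀:ℝ) * δ with hTdef
  have hT0 : 0 < T := by positivity
  have houter : ∀ j : ℕ, h ((2:ℝ)^j * T) ≤ (lam^B)^j * h T := by
    intro j
    induction j with
    | zero => simp
    | succ j ih =>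
      have hn' : n₀ ≤ 2^j * n₀ := Nat.le_mul_of_pos_left _ (by positivity)
      have hi := hinner (2^j * n₀) hn' B le_rfl
      have e1 : ((B:ℝ) + (B:ℝ)) * ((2 ^ j * n₀ : ℕ) : ℝ) * δ = (2:ℝ)^(j+1) * T := by
        rw [hTdef]; push_cast; ring
      have e2 : (B:ℝ) * ((2 ^ j * n₀ : ℕ) : ℝ) * δ = (2:ℝ)^j * T := by
        rw [hTdef]; push_cast; ring
      rw [e1, e2] at hi
      have hi' := hi
      calc h ((2:ℝ)^(j+1)*T) ≤ lam^B * h ((2:ℝ)^j * T) := hi'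
        _ ≤ lam^B * ((lam^B)^j * h T) := mul_le_mul_of_nonneg_left ih (by positivity)
        _ = (lam^B)^(j+1) * h T := by ring
  have hτT : τ₀ ≤ T := hτB n₀ le_rfl
  have hCpos : 0 < ξ' / T ^ γ := div_pos hξ' (Real.rpow_pos_of_pos hT0 γ)
  have hkey : ∀ j : ℕ, ξ / T^2 ≤ (4 * lam^B)^j * (ξ' / T ^ γ) := by
    intro j
    have h1le : (1:ℝ) ≤ (2:ℝ)^j := one_le_pow₀ (by norm_num : (1:ℝ) ≤ 2)
    have h2T : τ₀ ≤ (2:ℝ)^j * T := le_trans hτT (le_mul_of_one_le_left hT0.le h1le)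
    have hl := hlow ((2:ℝ)^j * T) h2T
    have hu := hup T hτT
    have h3 : ξ / ((2:ℝ)^j*T)^2 ≤ (lam^B)^j * (ξ' / T ^ γ) :=
      le_trans hl (le_trans (houter j) (mul_le_mul_of_nonneg_left hu (by positivity)))
    have e : ((2:ℝ)^j*T)^2 = (4:ℝ)^j * T^2 := by
      rw [mul_pow, ← pow_mul, mul_comm j 2, pow_mul]; norm_num
    rw [e] at h3
    have h4pos : (0:ℝ) < (4:ℝ)^j := by positivity
    calc ξ / T^2 = (4:ℝ)^j * (ξ / ((4:ℝ)^j * T^2)) := by field_simp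
      _ ≤ (4:ℝ)^j * ((lam^B)^j * (ξ'/T^γ)) := mul_le_mul_of_nonneg_left h3 h4pos.le
      _ = (4*lam^B)^j * (ξ'/T^γ) := by rw [mul_pow]; ring
  have h41 : 4 * lam^B < 1 := by linarith
  have hεpos : 0 < (ξ / T^2) / (ξ' / T ^ γ) := div_pos (div_pos hξ (by positivity)) hCpos
  obtain ⟨j, hj⟩ := exists_pow_lt_of_lt_one hεpos h41
  have hlt : (4*lam^B)^j * (ξ'/T^γ) < ξ/T^2 := (lt_div_iff₀ hCpos).mp hj
  linarith [hkey j]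
end

section
/- Let R > 0, σ > 0 and φ ∈ [0, π/2], and set y = R·σ·(√(1 + (R²/σ²)·cos²φ) − sinφ)/(R² + σ²). Then y ≥ (R·σ/(R² + σ²)) · (min(R²/σ², 1)/4) · cos²φ. -/
open Real

/-- With `R, σ > 0`, `φ ∈ [0, π/2]` and
`y = Rσ(√(1 + (R²/σ²)cos²φ) − sinφ)/(R² + σ²)`, we have
`y ≥ (Rσ/(R² + σ²))·(min(R²/σ², 1)/4)·cos²φ`. -/
theorem stmt10 (R σ φ : ℝ) (hR : 0 < R) (hσ : 0 < σ)
    (hφ0 : 0 ≤ φ) (hφ1 : φ ≤ π / 2) :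
    R * σ / (R ^ 2 + σ ^ 2) * (min (R ^ 2 / σ ^ 2) 1 / 4) * Real.cos φ ^ 2 ≤
      R * σ * (Real.sqrt (1 + R ^ 2 / σ ^ 2 * Real.cos φ ^ 2) - Real.sin φ) /
        (R ^ 2 + σ ^ 2) := by
  set a := R ^ 2 / σ ^ 2 with ha_def
  have ha : 0 ≤ a := by positivity
  have hs0 : 0 ≤ Real.sin φ :=
    Real.sin_nonneg_of_nonneg_of_le_pi hφ0 (le_trans hφ1 (by linarith [Real.pi_pos]))
  have hs1 : Real.sin φ ≤ 1 := Real.sin_le_one φ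
  have hpyth := Real.sin_sq_add_cos_sq φ
  have hm0 : 0 ≤ min a 1 := le_min ha zero_le_one
  have hm1 : min a 1 ≤ 1 := min_le_right _ _
  have hma : min a 1 ≤ a := min_le_left _ _
  have hT : 0 ≤ 1 + a * Real.cos φ ^ 2 := by positivity
  have hX : 0 ≤ Real.sin φ + min a 1 / 4 * Real.cos φ ^ 2 := by positivity
  have key : min a 1 / 4 * Real.cos φ ^ 2 ≤
      Real.sqrt (1 + a * Real.cos φ ^ 2) - Real.sin φ := by
    have h1 : Real.sin φ + min a 1 / 4 * Real.cos φ ^ 2 ≤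
        Real.sqrt (1 + a * Real.cos φ ^ 2) := by
      rw [Real.le_sqrt hX hT]
      have hc2 : Real.cos φ ^ 2 ≤ 1 := by nlinarith [sq_nonneg (Real.sin φ)]
      have hmc : min a 1 / 4 * Real.cos φ ^ 2 ≤ Real.cos φ ^ 2 / 4 := by nlinarith
      have hX2 : Real.sin φ + min a 1 / 4 * Real.cos φ ^ 2 ≤
          Real.sin φ + Real.cos φ ^ 2 / 4 := by linarith
      have h3 : (Real.sin φ + Real.cos φ ^ 2 / 4) ^ 2 ≤ 1 := by
        nlinarith [sq_nonneg (Real.cos φ ^ 2), mul_nonneg hs0 (sq_nonneg (Real.cos φ))]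
      have h4 : (Real.sin φ + min a 1 / 4 * Real.cos φ ^ 2) ^ 2 ≤
          (Real.sin φ + Real.cos φ ^ 2 / 4) ^ 2 := by
        apply pow_le_pow_left₀ hX hX2
      nlinarith [mul_nonneg ha (sq_nonneg (Real.cos φ))]
    linarith
  have hpre : 0 ≤ R * σ / (R ^ 2 + σ ^ 2) := by positivity
  calc R * σ / (R ^ 2 + σ ^ 2) * (min a 1 / 4) * Real.cos φ ^ 2
      = R * σ / (R ^ 2 + σ ^ 2) * (min a 1 / 4 * Real.cos φ ^ 2) := by ring
    _ ≤ R * σ / (R ^ 2 + σ ^ 2) *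
        (Real.sqrt (1 + a * Real.cos φ ^ 2) - Real.sin φ) :=
        mul_le_mul_of_nonneg_left key hpre
    _ = R * σ * (Real.sqrt (1 + a * Real.cos φ ^ 2) - Real.sin φ) /
        (R ^ 2 + σ ^ 2) := by ring
end

section
/- For all real numbers β > 0 and v > 0, ∫_{−π/2}^{π/2} (1/cosφ)·e^{−β v² tan²φ} dφ ≤ √π/(√β·v). -/
open Real
open MeasureTheory Set

/-- For `β, v > 0`,
`∫_{−π/2}^{π/2} (1/cosφ)·e^{−βv²tan²φ} dφ ≤ √π/(√β·v)`. -/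
theorem stmt12 (β v : ℝ) (hβ : 0 < β) (hv : 0 < v) :
    ∫ φ in (-(π / 2))..(π / 2),
        (1 / Real.cos φ) * Real.exp (-β * v ^ 2 * Real.tan φ ^ 2) ≤
      Real.sqrt π / (Real.sqrt β * v) := by
  have ha : 0 < β * v ^ 2 := by positivity
  set s : Set ℝ := Ioo (-(π / 2)) (π / 2) with hs
  have hms : MeasurableSet s := measurableSet_Ioo
  have hcos : ∀ x ∈ s, 0 < Real.cos x := fun x hx => Real.cos_pos_of_mem_Ioo hx
  have hderiv : ∀ x ∈ s, HasDerivWithinAt Real.tan (1 / Real.cos x ^ 2) s x :=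
    fun x hx => (Real.hasDerivAt_tan (hcos x hx).ne').hasDerivWithinAt
  have hinj : InjOn Real.tan s := Real.injOn_tan
  have himg : Real.tan '' s = univ := Real.image_tan_Ioo
  set g : ℝ → ℝ := fun w => Real.exp (-(β * v ^ 2) * w ^ 2) with hg
  have hsub := MeasureTheory.integral_image_eq_integral_abs_deriv_smul hms hderiv hinj g
  rw [himg] at hsub
  have hgauss : ∫ w, g w = Real.sqrt π / (Real.sqrt β * v) := by
    rw [hg, integral_gaussian, Real.sqrt_div Real.pi_pos.le, Real.sqrt_mul hβ.le,
      Real.sqrt_sq hv.le]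
  have hintbig : IntegrableOn (fun x => |1 / Real.cos x ^ 2| • g (Real.tan x)) s := by
    rw [← MeasureTheory.integrableOn_image_iff_integrableOn_abs_deriv_smul hms hderiv hinj g,
      himg, integrableOn_univ]
    exact integrable_exp_neg_mul_sq ha
  have hpt : ∀ x ∈ s, (1 / Real.cos x) * Real.exp (-β * v ^ 2 * Real.tan x ^ 2) ≤
      |1 / Real.cos x ^ 2| • g (Real.tan x) := by
    intro x hx
    have hc := hcos x hx
    have hc1 : Real.cos x ≤ 1 := Real.cos_le_one x
    have h1 : 1 / Real.cos x ≤ 1 / Real.cos x ^ 2 := by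
      apply one_div_le_one_div_of_le (by positivity)
      nlinarith
    have habs : |1 / Real.cos x ^ 2| = 1 / Real.cos x ^ 2 := abs_of_pos (by positivity)
    have hE : -β * v ^ 2 * Real.tan x ^ 2 = -(β * v ^ 2) * Real.tan x ^ 2 := by ring
    rw [habs, smul_eq_mul, hg, hE]
    exact mul_le_mul_of_nonneg_right h1 (Real.exp_pos _).le
  have hintsmall : IntegrableOn
      (fun x => (1 / Real.cos x) * Real.exp (-β * v ^ 2 * Real.tan x ^ 2)) s := by
    refine hintbig.mono' ?_ ?_
    · have htan : Measurable Real.tan := by rw [show Real.tan = fun x => Real.sin x / Real.cos x from funext Real.tan_eq_sin_div_cos]; exact Real.measurable_sin.div Real.measurable_cos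
      exact ((measurable_const.div Real.measurable_cos).mul
        (Real.measurable_exp.comp (measurable_const.mul (htan.pow_const 2)))).aestronglyMeasurable
    · filter_upwards [MeasureTheory.ae_restrict_mem hms] with x hx
      have hc := hcos x hx
      rw [Real.norm_eq_abs,
        abs_of_nonneg (le_of_lt (mul_pos (div_pos one_pos hc) (Real.exp_pos _)))]
      exact hpt x hx
  have hle : π / 2 ∈ Set.Ici (-(π/2)) := by
    simp; linarith [Real.pi_pos]
  calc ∫ φ in (-(π / 2))..(π / 2),
        (1 / Real.cos φ) * Real.exp (-β * v ^ 2 * Real.tan φ ^ 2)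
      = ∫ φ in s, (1 / Real.cos φ) * Real.exp (-β * v ^ 2 * Real.tan φ ^ 2) := by
        rw [intervalIntegral.integral_of_le (by linarith [Real.pi_pos]),
          MeasureTheory.integral_Ioc_eq_integral_Ioo]
    _ ≤ ∫ x in s, |1 / Real.cos x ^ 2| • g (Real.tan x) :=
        MeasureTheory.setIntegral_mono_on hintsmall hintbig hms hpt
    _ = ∫ w, g w := by rw [← hsub]; simp
    _ = Real.sqrt π / (Real.sqrt β * v) := hgauss
end

section
/- Let (X, m) be a measure space with m(X) < ∞, let β > 0 and 0 < σ_min ≤ σ_max, and let σ : X → ℝ be measurable with σ_min ≤ σ(x) ≤ σ_max for all x ∈ X. Then for every τ ≥ σ_max·√β, m(X)·(σ_min³/(6τ²) − β·σ_max⁵/(20τ⁴)) ≤ ∫_X [σ(x)/(2β) − (τ/(2β^{3/2}))·∫₀^{√β·σ(x)/τ} e^{−u²} du] dm(x) ≤ m(X)·σ_max³/(6τ²). -/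
open MeasureTheory intervalIntegral

lemma exp_neg_le_quad {v : ℝ} (hv : 0 ≤ v) : Real.exp (-v) ≤ 1 - v + v ^ 2 / 2 := by
  have h1 : 1 + v + v ^ 2 / 2 ≤ Real.exp v := Real.quadratic_le_exp_of_nonneg hv
  have h2 : Real.exp (-v) * Real.exp v = 1 := by rw [← Real.exp_add]; simp
  have h3 : 0 < Real.exp (-v) := Real.exp_pos _
  nlinarith [sq_nonneg v, sq_nonneg (v ^ 2)]

lemma poly_int_lo (t : ℝ) : (∫ u in (0:ℝ)..t, (1 - u ^ 2)) = t - t ^ 3 / 3 := by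
  rw [integral_sub (_root_.intervalIntegrable_const (c := (1:ℝ))) (intervalIntegrable_pow 2),
    intervalIntegral.integral_const, integral_pow]
  push_cast; simp [smul_eq_mul]; ring

lemma poly_int_hi (t : ℝ) :
    (∫ u in (0:ℝ)..t, (1 - u ^ 2 + u ^ 4 / 2)) = t - t ^ 3 / 3 + t ^ 5 / 10 := by
  rw [integral_add ((_root_.intervalIntegrable_const (c := (1:ℝ))).sub (intervalIntegrable_pow 2))
      ((intervalIntegrable_pow 4).div_const 2),
    integral_sub (_root_.intervalIntegrable_const (c := (1:ℝ))) (intervalIntegrable_pow 2),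
    intervalIntegral.integral_div, intervalIntegral.integral_const, integral_pow, integral_pow]
  push_cast; simp [smul_eq_mul]; ring

lemma erf_bounds {t : ℝ} (ht : 0 ≤ t) :
    t - t ^ 3 / 3 ≤ (∫ u in (0:ℝ)..t, Real.exp (-u ^ 2)) ∧
    (∫ u in (0:ℝ)..t, Real.exp (-u ^ 2)) ≤ t - t ^ 3 / 3 + t ^ 5 / 10 := by
  have hcont : Continuous fun u : ℝ => Real.exp (-u ^ 2) := by fun_prop
  have hint : IntervalIntegrable (fun u : ℝ => Real.exp (-u ^ 2)) volume 0 t :=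
    hcont.intervalIntegrable _ _
  constructor
  · rw [← poly_int_lo t]
    exact integral_mono_on ht
      ((continuous_const.sub (continuous_pow 2)).intervalIntegrable 0 t) hint
      (fun u _ => by have := Real.add_one_le_exp (-(u ^ 2)); linarith)
  · rw [← poly_int_hi t]
    exact integral_mono_on ht hint
      (((continuous_const.sub (continuous_pow 2)).add
        ((continuous_pow 4).div_const 2)).intervalIntegrable 0 t)
      (fun u _ => by
        have := exp_neg_le_quad (sq_nonneg u)
        nlinarith [this])

/-- For a finite measure space `(X, m)`, `β > 0`,
`0 < σ_min ≤ σ_max`, a measurable `σ : X → ℝ` with `σ_min ≤ σ(x) ≤ σ_max`, and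
`τ ≥ σ_max·√β`:
`m(X)·(σ_min³/(6τ²) − βσ_max⁵/(20τ⁴)) ≤ ∫_X [σ(x)/(2β) − (τ/(2β^{3/2}))·∫₀^{√βσ(x)/τ} e^{−u²} du] dm ≤ m(X)·σ_max³/(6τ²)`. -/
theorem stmt19 {X : Type*} [MeasurableSpace X] (m : Measure X) [IsFiniteMeasure m]
    (β σmin σmax : ℝ) (hβ : 0 < β) (hσmin : 0 < σmin) (hσ : σmin ≤ σmax)
    (σ : X → ℝ) (hσmeas : Measurable σ)
    (hσb : ∀ x : X, σmin ≤ σ x ∧ σ x ≤ σmax)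
    (τ : ℝ) (hτ : σmax * Real.sqrt β ≤ τ) :
    (m Set.univ).toReal * (σmin ^ 3 / (6 * τ ^ 2) - β * σmax ^ 5 / (20 * τ ^ 4)) ≤
        (∫ x, (σ x / (2 * β) -
            (τ / (2 * β ^ ((3 : ℝ) / 2))) *
              ∫ u in (0 : ℝ)..(Real.sqrt β * σ x / τ), Real.exp (-u ^ 2)) ∂m) ∧
      (∫ x, (σ x / (2 * β) -
          (τ / (2 * β ^ ((3 : ℝ) / 2))) *
            ∫ u in (0 : ℝ)..(Real.sqrt β * σ x / τ), Real.exp (-u ^ 2)) ∂m) ≤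
        (m Set.univ).toReal * (σmax ^ 3 / (6 * τ ^ 2)) := by
  have hσmax : 0 < σmax := hσmin.trans_le hσ
  obtain ⟨s, hs0, rfl⟩ : ∃ s : ℝ, 0 < s ∧ β = s ^ 2 :=
    ⟨Real.sqrt β, Real.sqrt_pos.mpr hβ, (Real.sq_sqrt hβ.le).symm⟩
  have hss : Real.sqrt (s ^ 2) = s := Real.sqrt_sq hs0.le
  have hτ0 : 0 < τ := lt_of_lt_of_le (by positivity) (hss ▸ hτ)
  have hβ32 : (s ^ 2 : ℝ) ^ ((3:ℝ)/2) = s ^ 3 := by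
    rw [← Real.rpow_natCast s 2, ← Real.rpow_mul hs0.le, ← Real.rpow_natCast s 3]
    norm_num
  simp only [hss, hβ32]
  set F : X → ℝ := fun x => σ x / (2 * s ^ 2) -
      (τ / (2 * s ^ 3)) * ∫ u in (0 : ℝ)..(s * σ x / τ), Real.exp (-u ^ 2) with hF
  have key : ∀ x, σmin ^ 3 / (6 * τ ^ 2) - s ^ 2 * σmax ^ 5 / (20 * τ ^ 4) ≤ F x ∧
      F x ≤ σmax ^ 3 / (6 * τ ^ 2) := by
    intro x
    obtain ⟨h1, h2⟩ := hσb x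
    have hs0' : 0 < σ x := lt_of_lt_of_le hσmin h1
    set t : ℝ := s * σ x / τ with hts
    have ht0 : 0 ≤ t := by positivity
    obtain ⟨hlo, hhi⟩ := erf_bounds ht0
    have hFeq : F x = (τ / (2 * s ^ 3)) * (t - ∫ u in (0:ℝ)..t, Real.exp (-u ^ 2)) := by
      rw [hF]
      simp only [mul_sub]
      have h : (τ / (2 * s ^ 3)) * t = σ x / (2 * s ^ 2) := by
        rw [hts]; field_simp
      rw [h]
    have hc : 0 < τ / (2 * s ^ 3) := by positivity
    have hvlo : (τ / (2 * s ^ 3)) * (t ^ 3 / 3 - t ^ 5 / 10) =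
        σ x ^ 3 / (6 * τ ^ 2) - s ^ 2 * σ x ^ 5 / (20 * τ ^ 4) := by
      rw [hts]; field_simp; ring
    have hvhi : (τ / (2 * s ^ 3)) * (t ^ 3 / 3) = σ x ^ 3 / (6 * τ ^ 2) := by
      rw [hts]; field_simp; ring
    constructor
    · rw [hFeq]
      have step : (τ / (2 * s ^ 3)) * (t ^ 3 / 3 - t ^ 5 / 10) ≤
          (τ / (2 * s ^ 3)) * (t - ∫ u in (0:ℝ)..t, Real.exp (-u ^ 2)) :=
        mul_le_mul_of_nonneg_left (by linarith) hc.le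
      refine le_trans ?_ step
      rw [hvlo]
      have e1 : σmin ^ 3 / (6 * τ ^ 2) ≤ σ x ^ 3 / (6 * τ ^ 2) := by gcongr
      have e2 : s ^ 2 * σ x ^ 5 / (20 * τ ^ 4) ≤ s ^ 2 * σmax ^ 5 / (20 * τ ^ 4) := by
        gcongr
      linarith
    · rw [hFeq]
      have step : (τ / (2 * s ^ 3)) * (t - ∫ u in (0:ℝ)..t, Real.exp (-u ^ 2)) ≤
          (τ / (2 * s ^ 3)) * (t ^ 3 / 3) :=
        mul_le_mul_of_nonneg_left (by linarith) hc.le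
      refine step.trans ?_
      rw [hvhi]
      gcongr
  have hFmeas : Measurable F := by
    apply Measurable.sub
    · exact hσmeas.div_const _
    · apply Measurable.const_mul
      have hcont : Continuous fun r : ℝ => ∫ u in (0:ℝ)..r, Real.exp (-u ^ 2) :=
        intervalIntegral.continuous_primitive
          (fun a b => (by fun_prop : Continuous fun u : ℝ =>
            Real.exp (-u ^ 2)).intervalIntegrable a b) 0
      exact hcont.measurable.comp ((hσmeas.const_mul _).div_const _)
  have hFint : Integrable F m := by
    have hbd : ∀ᵐ x ∂m, ‖F x‖ ≤
        max |σmin ^ 3 / (6 * τ ^ 2) - s ^ 2 * σmax ^ 5 / (20 * τ ^ 4)|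
          |σmax ^ 3 / (6 * τ ^ 2)| := by
      filter_upwards with x
      obtain ⟨k1, k2⟩ := key x
      rw [Real.norm_eq_abs, abs_le]
      constructor
      · calc -(max |σmin ^ 3 / (6 * τ ^ 2) - s ^ 2 * σmax ^ 5 / (20 * τ ^ 4)|
              |σmax ^ 3 / (6 * τ ^ 2)|)
            ≤ -|σmin ^ 3 / (6 * τ ^ 2) - s ^ 2 * σmax ^ 5 / (20 * τ ^ 4)| :=
              neg_le_neg (le_max_left _ _)
          _ ≤ σmin ^ 3 / (6 * τ ^ 2) - s ^ 2 * σmax ^ 5 / (20 * τ ^ 4) := neg_abs_le _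
          _ ≤ F x := k1
      · exact k2.trans ((le_abs_self _).trans (le_max_right _ _))
    exact (integrable_const _).mono' hFmeas.aestronglyMeasurable hbd
  constructor
  · calc (m Set.univ).toReal * (σmin ^ 3 / (6 * τ ^ 2) - s ^ 2 * σmax ^ 5 / (20 * τ ^ 4))
        = ∫ _x, (σmin ^ 3 / (6 * τ ^ 2) - s ^ 2 * σmax ^ 5 / (20 * τ ^ 4)) ∂m := by
          rw [MeasureTheory.integral_const, smul_eq_mul]; rfl
      _ ≤ ∫ x, F x ∂m :=
          MeasureTheory.integral_mono (integrable_const _) hFint (fun x => (key x).1)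
  · calc (∫ x, F x ∂m) ≤ ∫ _x, σmax ^ 3 / (6 * τ ^ 2) ∂m :=
          MeasureTheory.integral_mono hFint (integrable_const _) (fun x => (key x).2)
      _ = (m Set.univ).toReal * (σmax ^ 3 / (6 * τ ^ 2)) := by
          rw [MeasureTheory.integral_const, smul_eq_mul]; rfl
end
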